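/- The commutator of the canonical translation operator with the screening-shift satisfies [T^aff, T_{αᵢ}] = α̃_{i,−1} T_{αᵢ}, where T_{αᵢ}: π₀ → π_{αᵢ} is the shift operator with L₀|αᵢ⟩ = |αᵢ⟩, L₋₁|αᵢ⟩ = αᵢ,₋₁|αᵢ⟩, Lⱼ|αᵢ⟩ = 0 for j ≥ 1, and [δ₋ₘ, T_{αᵢ}] = 0 for m > 0; here α̃ᵢ = αᵢ − δ/h and only the terms L₋₁ − (1/h)δ₋₁L₀ of T^aff contribute. Consequently [T^aff, Qᵢ] = −α̃_{i,−1}Qᵢ for the screening operators Qᵢ = −εᵢ^{−1}T_{−αᵢ}S̄_{αᵢ}. -/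
import Mathlib


/-!
Statement 19: The commutator of the canonical translation operator with the shift
operator satisfies `[T^aff, 𝖳_{αᵢ}] = α̃_{i,−1} 𝖳_{αᵢ}`, where `𝖳_{αᵢ} : π₀ → π_{αᵢ}`
is the shift operator with `L₀|αᵢ⟩ = |αᵢ⟩` (i.e. `[L₀, 𝖳] = 𝖳`), `L₋₁|αᵢ⟩ = αᵢ,₋₁|αᵢ⟩`
(i.e. `[L₋₁, 𝖳] = αᵢ,₋₁ 𝖳`), `Lⱼ|αᵢ⟩ = 0` for `j ≥ 1` (i.e. `[Lⱼ, 𝖳] = 0`), and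
`[δ₋ₘ, 𝖳] = 0` for `m > 0`; here `α̃ᵢ = αᵢ − δ/h` so
`α̃_{i,−1} = αᵢ,₋₁ − (1/h) δ₋₁`, and only the terms `L₋₁ − (1/h) δ₋₁ L₀` of `T^aff`
contribute.  Consequently `[T^aff, Qᵢ] = −α̃_{i,−1} Qᵢ` for the screening operators
`Qᵢ = −εᵢ⁻¹ 𝖳_{−αᵢ} S̄_{αᵢ}` (using that `S̄_{αᵢ}` commutes with `T^aff` and that
`[T^aff, 𝖳_{−αᵢ}] = −α̃_{i,−1} 𝖳_{−αᵢ}`).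

`V` plays the role of `π₀` and `W` of `π_{αᵢ}`; `DV/DW m` are the operators `δ₋ₘ`,
`AV/AW` the operators `αᵢ,₋₁`, and `taff` the canonical translation operator.
-/

open Function

private lemma pnat_coe_sum (l : List ℕ+) :
    (l.map fun n => (n : ℕ)).sum = (l.map PNat.val).sum := by
  induction l with
  | nil => rfl
  | cons a t ih => simpa using ih

private lemma pnat_coe_prod (l : List ℕ+) :
    (l.map fun n => ((n : ℕ) : ℂ)).prod = (l.map fun n : ℕ+ => ((n.val : ℕ) : ℂ)).prod := by
  induction l with
  | nil => rfl
  | cons a t ih => simpa using ih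

private lemma list_pnat_sum_eq_zero {l : List ℕ+}
    (hl : (l.map PNat.val).sum = 0) : l = [] := by
  cases l with
  | nil => rfl
  | cons a t =>
    simp only [List.map_cons, List.sum_cons] at hl
    have := a.pos
    omega

private lemma list_pnat_sum_eq_one {l : List ℕ+}
    (hl : (l.map PNat.val).sum = 1) : l = [1] := by
  cases l with
  | nil => simp only [List.map_nil, List.sum_nil] at hl; omega
  | cons a t =>
    simp only [List.map_cons, List.sum_cons] at hl
    have ha := a.pos
    have ha1 : (a : ℕ) = 1 := by omega
    have ht : (t.map PNat.val).sum = 0 := by omega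
    rw [list_pnat_sum_eq_zero ht]
    congr 1
    exact PNat.coe_injective ha1

private lemma finite_sum_le (n : ℕ) :
    {l : List ℕ+ | (l.map PNat.val).sum ≤ n}.Finite := by
  induction n with
  | zero =>
    refine (Set.finite_singleton ([] : List ℕ+)).subset ?_
    intro l hl
    simp only [Set.mem_setOf_eq, Nat.le_zero] at hl
    simp [list_pnat_sum_eq_zero hl]
  | succ n ih =>
    have hfin : {m : ℕ+ | (m : ℕ) ≤ n + 1}.Finite := by
      have he : {m : ℕ+ | (m : ℕ) ≤ n + 1} = (fun m : ℕ+ => (m : ℕ)) ⁻¹' Set.Iic (n + 1) := rfl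
      rw [he]
      exact (Set.finite_Iic _).preimage PNat.coe_injective.injOn
    refine ((Set.finite_singleton ([] : List ℕ+)).union
      (hfin.biUnion fun m _ => ih.image (List.cons m))).subset ?_
    intro l hl
    cases l with
    | nil => exact Or.inl rfl
    | cons a t =>
      right
      simp only [Set.mem_setOf_eq, List.map_cons, List.sum_cons] at hl
      have ha := a.pos
      exact Set.mem_biUnion (show (a : ℕ) ≤ n + 1 by omega)
        ⟨t, by simp only [Set.mem_setOf_eq]; omega, rfl⟩

private lemma foldr_end_zero {V : Type} [AddCommGroup V] [Module ℂ V]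
    (D : ℕ+ → Module.End ℂ V) (l : List ℕ+) :
    l.foldr (fun n acc => D n acc) (0 : V) = 0 := by
  induction l with
  | nil => rfl
  | cons a t ih => simp only [List.foldr_cons, ih, map_zero]

private lemma foldr_smul {V : Type} [AddCommGroup V] [Module ℂ V]
    (D : ℕ+ → Module.End ℂ V) (l : List ℕ+) (c : ℂ) (x : V) :
    l.foldr (fun n acc => D n acc) (c • x) = c • l.foldr (fun n acc => D n acc) x := by
  induction l with
  | nil => rfl
  | cons a t ih => simp only [List.foldr_cons, ih, map_smul]

private lemma foldr_comm {V W : Type} [AddCommGroup V] [Module ℂ V] [AddCommGroup W]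
    [Module ℂ W] (DV : ℕ+ → Module.End ℂ V) (DW : ℕ+ → Module.End ℂ W)
    (Tsh : V →ₗ[ℂ] W) (hDsh : ∀ m : ℕ+, (DW m) ∘ₗ Tsh = Tsh ∘ₗ (DV m))
    (l : List ℕ+) (x : V) :
    l.foldr (fun n acc => DW n acc) (Tsh x) = Tsh (l.foldr (fun n acc => DV n acc) x) := by
  induction l with
  | nil => rfl
  | cons a t ih =>
    simp only [List.foldr_cons, ih]
    exact LinearMap.congr_fun (hDsh a) _

/-- The canonical translation operator `T^aff` applied to `w` (sum over ordered tuples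
`(n₁,…,nₘ)` of positive integers, encoded as lists). -/
noncomputable def taff {V : Type*} [AddCommGroup V] [Module ℂ V]
    (h : ℂ) (D : ℕ+ → Module.End ℂ V) (L : ℤ → Module.End ℂ V) (w : V) : V :=
  ∑ᶠ l : List ℕ+,
    (((-1 : ℂ) ^ l.length) /
        (h ^ l.length * (l.length.factorial : ℂ) * ((l.map fun n => ((n : ℕ) : ℂ)).prod))) •
      (l.foldr (fun n acc => D n acc)
        (L (((l.map fun n => (n : ℕ)).sum : ℤ) - 1) w))

private lemma taff_smul {V : Type} [AddCommGroup V] [Module ℂ V]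
    (h : ℂ) (D : ℕ+ → Module.End ℂ V) (L : ℤ → Module.End ℂ V) (c : ℂ) (w : V) :
    taff h D L (c • w) = c • taff h D L w := by
  unfold taff
  rw [smul_finsum]
  refine finsum_congr fun l => ?_
  rw [map_smul, foldr_smul, smul_comm]

theorem taff_shift_commutator
    {V W : Type} [AddCommGroup V] [Module ℂ V] [AddCommGroup W] [Module ℂ W]
    (h : ℂ)
    (LV : ℤ → Module.End ℂ V) (LW : ℤ → Module.End ℂ W)
    (DV : ℕ+ → Module.End ℂ V) (DW : ℕ+ → Module.End ℂ W)
    (AV : Module.End ℂ V) (AW : Module.End ℂ W)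
    (Tsh : V →ₗ[ℂ] W)
    (hL0 : (LW 0) ∘ₗ Tsh = Tsh ∘ₗ (LV 0) + Tsh)
    (hLj : ∀ j : ℤ, 1 ≤ j → (LW j) ∘ₗ Tsh = Tsh ∘ₗ (LV j))
    (hLm1 : (LW (-1)) ∘ₗ Tsh = Tsh ∘ₗ (LV (-1)) + AW ∘ₗ Tsh)
    (hDsh : ∀ m : ℕ+, (DW m) ∘ₗ Tsh = Tsh ∘ₗ (DV m))
    (hsmV : ∀ v : V, ∃ N : ℤ, ∀ n : ℤ, N ≤ n → LV n v = 0)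
    (hsmW : ∀ w : W, ∃ N : ℤ, ∀ n : ℤ, N ≤ n → LW n w = 0) :
    -- [T^aff, 𝖳_{αᵢ}] = α̃_{i,−1} 𝖳_{αᵢ}
    (∀ v : V,
      taff h DW LW (Tsh v) - Tsh (taff h DV LV v)
        = AW (Tsh v) - h⁻¹ • (DW 1) (Tsh v)) ∧
    -- consequently, [T^aff, Qᵢ] = −α̃_{i,−1} Qᵢ for Qᵢ = −εᵢ⁻¹ 𝖳_{−αᵢ} S̄_{αᵢ}
    (∀ (S : V →ₗ[ℂ] W) (Tsh2 : W →ₗ[ℂ] V) (εi : ℂ) (Q : V →ₗ[ℂ] V),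
      (∀ v : V, taff h DW LW (S v) = S (taff h DV LV v)) →
      (∀ w : W, taff h DV LV (Tsh2 w) - Tsh2 (taff h DW LW w)
          = -(AV (Tsh2 w) - h⁻¹ • (DV 1) (Tsh2 w))) →
      Q = (-εi⁻¹) • (Tsh2 ∘ₗ S) →
      ∀ v : V,
        taff h DV LV (Q v) - Q (taff h DV LV v)
          = -(AV (Q v) - h⁻¹ • (DV 1) (Q v))) := by
  constructor
  · intro v
    obtain ⟨N, hN⟩ := hsmV v
    set c : List ℕ+ → ℂ := fun l =>
      ((-1 : ℂ) ^ l.length) /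
        (h ^ l.length * (l.length.factorial : ℂ) * ((l.map fun n => ((n : ℕ) : ℂ)).prod))
      with hc
    set termV : List ℕ+ → V := fun l =>
      c l • (l.foldr (fun n acc => DV n acc)
        (LV (((l.map fun n => (n : ℕ)).sum : ℤ) - 1) v)) with htermV
    set termW : List ℕ+ → W := fun l =>
      c l • (l.foldr (fun n acc => DW n acc)
        (LW (((l.map fun n => (n : ℕ)).sum : ℤ) - 1) (Tsh v))) with htermW
    set eA : List ℕ+ → W := fun l => if l = [] then AW (Tsh v) else 0 with heA
    set eB : List ℕ+ → W := fun l => if l = [1] then (-h⁻¹) • DW 1 (Tsh v) else 0 with heB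
    have key : ∀ l : List ℕ+, termW l = Tsh (termV l) + eA l + eB l := by
      intro l
      by_cases h0 : (l.map PNat.val).sum = 0
      · -- l = []
        have hl := list_pnat_sum_eq_zero h0
        subst hl
        have hidx : ((((([] : List ℕ+).map fun n => (n : ℕ)).sum : ℕ) : ℤ) - 1) = -1 := by
          rw [pnat_coe_sum]
          norm_num
        have h1 : LW (-1) (Tsh v) = Tsh (LV (-1) v) + AW (Tsh v) := by
          have := LinearMap.congr_fun hLm1 v
          simpa using this
        have hc0 : c [] = 1 := by
          rw [hc]
          norm_num
        simp only [htermV, htermW, heA, heB, if_pos rfl,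
          if_neg (by simp : ¬([] : List ℕ+) = [1]), List.foldr_nil, hc0, one_smul,
          add_zero, hidx]
        rw [h1]
      · by_cases h1s : (l.map PNat.val).sum = 1
        · -- l = [1]
          have hl := list_pnat_sum_eq_one h1s
          subst hl
          have hidx : ((((([1] : List ℕ+).map fun n => (n : ℕ)).sum : ℕ) : ℤ) - 1) = 0 := by
            rw [pnat_coe_sum]
            norm_num
          have h1 : LW 0 (Tsh v) = Tsh (LV 0 v) + Tsh v := by
            have h2 := LinearMap.congr_fun hL0 v
            simpa using h2
          have hc1 : c [1] = -h⁻¹ := by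
            rw [hc]
            simp only [pnat_coe_prod, List.map_cons, List.map_nil, List.prod_cons,
              List.prod_nil, PNat.one_coe, Nat.cast_one, mul_one, List.length_cons,
              List.length_nil, zero_add, pow_one, Nat.factorial_one]
            rw [neg_div, one_div]
          simp only [htermV, htermW, heA, heB, if_pos rfl,
            if_neg (by simp : ¬([1] : List ℕ+) = []), List.foldr_cons, List.foldr_nil,
            zero_add, hidx]
          rw [h1, map_add]
          have hDT : DW 1 (Tsh (LV 0 v)) = Tsh (DV 1 (LV 0 v)) :=
            LinearMap.congr_fun (hDsh 1) _
          rw [hDT, smul_add, map_smul, hc1]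
          abel
        · -- sum ≥ 2
          have hs : 2 ≤ (l.map PNat.val).sum := by omega
          have hl0 : l ≠ [] := by
            intro hl; subst hl; simp at h0
          have hl1 : l ≠ [1] := by
            intro hl; subst hl; simp at h1s
          simp only [htermV, htermW, heA, heB, if_neg hl0, if_neg hl1, add_zero]
          have hj : (1 : ℤ) ≤ ((l.map fun n => (n : ℕ)).sum : ℤ) - 1 := by
            rw [pnat_coe_sum]
            have h2 : (2 : ℤ) ≤ ((l.map PNat.val).sum : ℤ) := by exact_mod_cast hs
            omega
          have h1 : LW (((l.map fun n => (n : ℕ)).sum : ℤ) - 1) (Tsh v)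
              = Tsh (LV (((l.map fun n => (n : ℕ)).sum : ℤ) - 1) v) :=
            LinearMap.congr_fun (hLj _ hj) v
          rw [h1, foldr_comm DV DW Tsh hDsh, map_smul]
    have hsuppV : support termV ⊆ {l : List ℕ+ | (l.map PNat.val).sum ≤ N.toNat} := by
      intro l hl
      simp only [Set.mem_setOf_eq]
      by_contra hcon
      push_neg at hcon
      have hNs : N ≤ ((l.map fun n => (n : ℕ)).sum : ℤ) - 1 := by
        rw [pnat_coe_sum]
        have h1 := Int.self_le_toNat N
        have h2 : (N.toNat : ℤ) < ((l.map PNat.val).sum : ℤ) := by exact_mod_cast hcon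
        omega
      apply hl
      simp only [htermV, hN _ hNs, foldr_end_zero, smul_zero]
    have hfinV : (support termV).Finite := (finite_sum_le N.toNat).subset hsuppV
    have hfinTV : (support fun l => Tsh (termV l)).Finite := by
      refine hfinV.subset ?_
      intro l hl hcon
      exact hl (by simp only [hcon, map_zero])
    have hfinA : (support eA).Finite := by
      refine (Set.finite_singleton ([] : List ℕ+)).subset ?_
      intro l hl
      by_contra hcon
      exact hl (if_neg hcon)
    have hfinB : (support eB).Finite := by
      refine (Set.finite_singleton ([1] : List ℕ+)).subset ?_
      intro l hl
      by_contra hcon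
      exact hl (if_neg hcon)
    have e1 : taff h DW LW (Tsh v) = ∑ᶠ l, termW l := rfl
    have e2 : taff h DV LV v = ∑ᶠ l, termV l := rfl
    have hmap : Tsh (∑ᶠ l, termV l) = ∑ᶠ l, Tsh (termV l) :=
      Tsh.toAddMonoidHom.map_finsum hfinV
    have hA : ∑ᶠ l, eA l = AW (Tsh v) := by
      rw [finsum_eq_single eA [] (fun x hx => if_neg hx)]
      simp [heA]
    have hB : ∑ᶠ l, eB l = (-h⁻¹) • DW 1 (Tsh v) := by
      rw [finsum_eq_single eB [1] (fun x hx => if_neg hx)]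
      simp [heB]
    rw [e1, e2, finsum_congr key, finsum_add_distrib ((hfinTV.union hfinA).subset (support_add _ _)) hfinB,
      finsum_add_distrib hfinTV hfinA, hmap, hA, hB, neg_smul]
    abel
  · intro S Tsh2 εi Q hS hT2 hQ v
    have hQv : ∀ x : V, Q x = (-εi⁻¹) • Tsh2 (S x) := by
      intro x; rw [hQ]; rfl
    rw [hQv v, hQv (taff h DV LV v), taff_smul, ← hS v, map_smul, ← smul_sub,
      hT2 (S v)]
    simp only [map_smul]
    module
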